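/- Let A ≥ 1 be a natural number, n ≥ 1, let p₁, …, pₙ ∈ (0,1) and s₀ ∈ (0,1). Define the backward iterates u_n = s₀ and u_j = (1 − p_{j+1}·(1 − u_{j+1}))^A for 0 ≤ j < n, and set P_n := 1 and P_j := ∏_{i=j+1}^{n} (A·p_i) for 0 ≤ j < n, and η_{n−1} := P_{n−1}/(1 − u_{n−1}). Then every u_j lies in (0,1), and for every 0 ≤ j ≤ n−1 one has the lower bound 1 − u_j ≥ P_j / (η_{n−1} + Σ_{k=j}^{n−2} P_k). -/
import Mathlib


/-- Backward iterates of binomial generating functions: with `u n = s₀ ∈ (0,1)` and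
`u j = (1 − p_{j+1}(1 − u_{j+1}))^A`, setting `P j = ∏_{i=j+1}^n (A·p_i)` and
`η = P_{n−1}/(1 − u_{n−1})`, every `u j` lies in `(0,1)` and
`1 − u j ≥ P j / (η + Σ_{k=j}^{n−2} P k)` for all `0 ≤ j ≤ n−1`. -/
theorem stmt_15 (A n : ℕ) (hA : 1 ≤ A) (hn : 1 ≤ n) (p u : ℕ → ℝ)
    (hp : ∀ k, 1 ≤ k → k ≤ n → p k ∈ Set.Ioo (0 : ℝ) 1)
    (hun : u n ∈ Set.Ioo (0 : ℝ) 1)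
    (hu : ∀ j, j < n → u j = (1 - p (j + 1) * (1 - u (j + 1))) ^ A) :
    (∀ j, j ≤ n → u j ∈ Set.Ioo (0 : ℝ) 1) ∧
    ∀ j, j < n →
      (∏ i ∈ Finset.Icc (j + 1) n, ((A : ℝ) * p i)) /
          ((∏ i ∈ Finset.Icc n n, ((A : ℝ) * p i)) / (1 - u (n - 1)) +
            ∑ k ∈ Finset.Ico j (n - 1), ∏ i ∈ Finset.Icc (k + 1) n, ((A : ℝ) * p i)) ≤
        1 - u j := by
  -- membership claim
  have key : ∀ k, k ≤ n → u (n - k) ∈ Set.Ioo (0 : ℝ) 1 := by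
    intro k
    induction k with
    | zero => intro _; simpa using hun
    | succ k ih =>
      intro hk
      have hk' : k ≤ n := by omega
      have hs := ih hk'
      have h1 : n - (k + 1) < n := by omega
      have h2 : n - (k + 1) + 1 = n - k := by omega
      have hpq := hp (n - k) (by omega) (by omega)
      rw [hu _ h1, h2]
      obtain ⟨hq0, hq1⟩ := hpq
      obtain ⟨hs0, hs1⟩ := hs
      have hx0 : 0 < p (n - k) * (1 - u (n - k)) := by nlinarith
      have hx1 : p (n - k) * (1 - u (n - k)) < 1 := by nlinarith
      constructor
      · exact pow_pos (by nlinarith) A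
      · exact pow_lt_one₀ (by nlinarith) (by nlinarith) (by omega)
  have mem : ∀ j, j ≤ n → u j ∈ Set.Ioo (0 : ℝ) 1 := by
    intro j hj
    have := key (n - j) (by omega)
    rwa [show n - (n - j) = j by omega] at this
  -- key analytic bound
  have pow_bound : ∀ x : ℝ, 0 < x → x < 1 → ((1 : ℝ) - x) ^ A ≤ 1 / (1 + (A : ℝ) * x) := by
    intro x hx hx1
    have hA0 : (1 : ℝ) ≤ (A : ℝ) := by exact_mod_cast hA
    have h1 : (1 - x : ℝ) ≤ 1 / (1 + x) := by
      rw [le_div_iff₀ (by linarith)]; nlinarith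
    have h2 : ((1 : ℝ) - x) ^ A ≤ (1 / (1 + x)) ^ A :=
      pow_le_pow_left₀ (by linarith) h1 A
    have h3 : (1 + (A : ℝ) * x) ≤ (1 + x) ^ A := by
      have := one_add_mul_le_pow (a := x) (by linarith) A
      linarith
    calc ((1 : ℝ) - x) ^ A ≤ (1 / (1 + x)) ^ A := h2
      _ = 1 / (1 + x) ^ A := by rw [div_pow, one_pow]
      _ ≤ 1 / (1 + (A : ℝ) * x) := by
          apply one_div_le_one_div_of_le (by nlinarith) h3
  -- abbreviations
  set Pf : ℕ → ℝ := fun j => ∏ i ∈ Finset.Icc (j + 1) n, ((A : ℝ) * p i) with hPf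
  set D : ℕ → ℝ := fun j =>
    Pf (n - 1) / (1 - u (n - 1)) + ∑ k ∈ Finset.Ico j (n - 1), Pf k with hD
  have hn1 : n - 1 + 1 = n := by omega
  have hPpos : ∀ j, 0 < Pf j := by
    intro j
    apply Finset.prod_pos
    intro i hi
    simp only [Finset.mem_Icc] at hi
    have := hp i (by omega) hi.2
    have : 0 < p i := this.1
    have hA0 : (0 : ℝ) < A := by positivity
    positivity
  have hupos : ∀ j, j ≤ n → 0 < 1 - u j := fun j hj => by linarith [(mem j hj).2]
  have hun1 : 0 < 1 - u (n - 1) := hupos (n - 1) (by omega)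
  have hDpos : ∀ j, 0 < D j := by
    intro j
    have h1 : 0 < Pf (n - 1) / (1 - u (n - 1)) := div_pos (hPpos _) hun1
    have h2 : 0 ≤ ∑ k ∈ Finset.Ico j (n - 1), Pf k :=
      Finset.sum_nonneg fun k _ => (hPpos k).le
    simp only [hD]
    linarith
  -- per-step inequality
  have step : ∀ j, j < n →
      (A : ℝ) * p (j + 1) * (1 - u (j + 1)) ≤
        (1 - u j) * (1 + (A : ℝ) * p (j + 1) * (1 - u (j + 1))) := by
    intro j hj
    obtain ⟨hq0, hq1⟩ := hp (j + 1) (by omega) (by omega)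
    obtain ⟨hs0, hs1⟩ := mem (j + 1) (by omega)
    set x := p (j + 1) * (1 - u (j + 1)) with hx
    have hx0 : 0 < x := by nlinarith
    have hx1 : x < 1 := by nlinarith
    have hb := pow_bound x hx0 hx1
    rw [hu j hj]
    have hpos : (0 : ℝ) < 1 + (A : ℝ) * x := by positivity
    have h1 : (1 - x) ^ A * (1 + (A : ℝ) * x) ≤ 1 := by
      rw [← le_div_iff₀ hpos]; exact hb
    have hax : (A : ℝ) * p (j + 1) * (1 - u (j + 1)) = (A : ℝ) * x := by
      rw [hx]; ring
    rw [hax]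
    nlinarith [h1]
  -- main backward induction
  have main : ∀ k j, j < n → n - 1 - j = k → Pf j ≤ (1 - u j) * D j := by
    intro k
    induction k with
    | zero =>
      intro j hj hjk
      have hj' : j = n - 1 := by omega
      subst hj'
      simp only [hD, Finset.Ico_self, Finset.sum_empty, add_zero]
      rw [mul_comm, div_mul_cancel₀ _ (ne_of_gt hun1)]
    | succ k ih =>
      intro j hj hjk
      have hj1 : j + 1 < n := by omega
      have IH := ih (j + 1) hj1 (by omega)
      set a := (A : ℝ) * p (j + 1) with ha
      set y := 1 - u (j + 1) with hy
      have hq := hp (j + 1) (by omega) (by omega)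
      have ha0 : 0 < a := by
        have : (0:ℝ) < A := by positivity
        exact mul_pos this hq.1
      have hy0 : 0 < y := hupos (j + 1) (by omega)
      have hPsplit : Pf j = a * Pf (j + 1) := by
        simp only [hPf]
        rw [show Finset.Icc (j + 1) n = Finset.Ico (j + 1) (n + 1) by
          rw [Finset.Ico_add_one_right_eq_Icc],
          Finset.prod_eq_prod_Ico_succ_bot (by omega),
          show Finset.Ico (j + 1 + 1) (n + 1) = Finset.Icc (j + 1 + 1) n by
            rw [Finset.Ico_add_one_right_eq_Icc]]
      have hDsplit : D j = D (j + 1) + Pf j := by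
        simp only [hD]
        rw [Finset.sum_eq_sum_Ico_succ_bot (by omega : j < n - 1)]
        ring
      have hS := step j (by omega)
      rw [← ha, ← hy] at hS
      have hD'pos := hDpos (j + 1)
      have hSnn : 0 < 1 - u j := hupos j (by omega)
      rw [hPsplit, hDsplit, hPsplit]
      -- goal: a * Pf (j+1) ≤ (1 - u j) * (D (j+1) + a * Pf (j+1))
      nlinarith [mul_le_mul_of_nonneg_left IH ha0.le, hPpos (j + 1),
        mul_le_mul_of_nonneg_right hS
          (add_pos hD'pos (mul_pos ha0 (hPpos (j+1)))).le,
        mul_pos ha0 hy0]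
  refine ⟨mem, ?_⟩
  intro j hj
  have h := main (n - 1 - j) j hj rfl
  have hIcc : Finset.Icc n n = Finset.Icc (n - 1 + 1) n := by rw [hn1]
  rw [hIcc]
  have hpos : (0:ℝ) < (∏ i ∈ Finset.Icc (n-1+1) n, ((A : ℝ) * p i)) / (1 - u (n - 1)) +
        ∑ k ∈ Finset.Ico j (n - 1), ∏ i ∈ Finset.Icc (k + 1) n, ((A : ℝ) * p i) := hDpos j
  rw [div_le_iff₀ hpos]
  exact h
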